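/- Let γ > β ≥ 1 and q > β. Define σ = q(q−1)/(q−β), q_γ = q − 1 + γ, and q' = (σq + β(q_γ − σ)) / ((q−β)(q_γ − σ)). Then σ < q_γ, and lim_{q→∞} q'/q = 1/(γ−β). -/

import Mathlib

open Filter

theorem sigma_lt_and_limit (γ β : ℝ) (hβ : 1 ≤ β) (hβγ : β < γ) :
    (∀ q : ℝ, max β (β * (γ - 1) / (γ - β)) < q →
        q * (q - 1) / (q - β) < q - 1 + γ) ∧
    Tendsto
      (fun q : ℝ =>
        ((q * (q - 1) / (q - β)) * q
            + β * ((q - 1 + γ) - q * (q - 1) / (q - β))) /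
          ((q - β) * ((q - 1 + γ) - q * (q - 1) / (q - β))) / q)
      atTop (nhds (1 / (γ - β))) := by
  have hγβ : 0 < γ - β := by linarith
  constructor
  · intro q hq
    rw [max_lt_iff] at hq
    obtain ⟨h1, h2⟩ := hq
    rw [div_lt_iff₀ hγβ] at h2
    rw [div_lt_iff₀ (by linarith : (0:ℝ) < q - β)]
    nlinarith
  · set g : ℝ → ℝ := fun t =>
      (1 - t + β * (γ - β) * t ^ 2 - β ^ 2 * (γ - 1) * t ^ 3) /
        ((1 - β * t) * ((γ - β) - β * (γ - 1) * t)) with hg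
    have hgc : ContinuousAt g 0 := by
      apply ContinuousAt.div
      · fun_prop
      · fun_prop
      · simp
        positivity
    have hg0 : g 0 = 1 / (γ - β) := by simp [hg]
    have hcomp : Tendsto (fun q : ℝ => g q⁻¹) atTop (nhds (1 / (γ - β))) := by
      rw [← hg0]
      exact hgc.tendsto.comp tendsto_inv_atTop_zero
    refine Tendsto.congr' ?_ hcomp
    filter_upwards [eventually_gt_atTop (max β (max 0 (β * (γ - 1) / (γ - β))))]
      with q hq
    rw [max_lt_iff, max_lt_iff] at hq
    obtain ⟨h1, h0, h2⟩ := hq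
    have hb : q - β ≠ 0 := by linarith
    have hq0 : q ≠ 0 := by linarith
    rw [div_lt_iff₀ hγβ] at h2
    have hEpos : 0 < (γ - β) * q - β * (γ - 1) := by nlinarith
    have hE : (q - 1 + γ) - q * (q - 1) / (q - β)
        = ((γ - β) * q - β * (γ - 1)) / (q - β) := by
      field_simp; ring
    have hd1 : 1 - β * q⁻¹ ≠ 0 := by
      rw [sub_ne_zero]
      intro h
      apply hb
      field_simp at h
      linarith
    have hd2 : (γ - β) - β * (γ - 1) * q⁻¹ ≠ 0 := by
      apply ne_of_gt
      rw [sub_pos, mul_inv_lt_iff₀ (by linarith : (0:ℝ) < q)]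
      linarith [hEpos]
    have hL : ((q * (q - 1) / (q - β)) * q
            + β * ((q - 1 + γ) - q * (q - 1) / (q - β))) /
          ((q - β) * ((q - 1 + γ) - q * (q - 1) / (q - β))) / q
        = (q ^ 2 * (q - 1) + β * ((γ - β) * q - β * (γ - 1))) /
            (q * (q - β) * ((γ - β) * q - β * (γ - 1))) := by
      rw [hE]
      field_simp
    have hR : g q⁻¹
        = (q ^ 2 * (q - 1) + β * ((γ - β) * q - β * (γ - 1))) /
            (q * (q - β) * ((γ - β) * q - β * (γ - 1))) := by
      simp only [hg]
      rw [div_eq_div_iff (by positivity) (by positivity)]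
      field_simp
      ring
    rw [hL, hR]
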